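/- Let N > p, let F = QT be a real N×p matrix with QᵀQ = I_p and T an invertible p×p matrix, let D be a diagonal N×N matrix with nonnegative entries such that R = QᵀDQ is invertible, and set A = FᵀF, M_0 = FᵀDF, S = QᵀD²Q, U = R^{-1}SR^{-1}. Then for any σ² ≥ 0 and κ > 0, the maximum over τ ∈ ℝ^N satisfying Fᵀτ = 0 and ‖τ‖ = κ of σ² tr(A M_0^{-1}) + κ² + (FᵀDτ)ᵀ M_0^{-1} A M_0^{-1} (FᵀDτ) equals σ² tr(R^{-1}) + κ² λ_max(U), where λ_max denotes the largest eigenvalue. -/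

import Mathlib

open Matrix BigOperators

lemma dp_mv {m n : Type*} [Fintype m] [Fintype n] (A : Matrix m n ℝ) (x : n → ℝ) (y : m → ℝ) :
    (A *ᵥ x) ⬝ᵥ y = x ⬝ᵥ (Aᵀ *ᵥ y) := by
  rw [dotProduct_mulVec, vecMul_transpose]

lemma dp_symm {n : Type*} [Fintype n] (A : Matrix n n ℝ) (hA : Aᵀ = A) (x y : n → ℝ) :
    x ⬝ᵥ (A *ᵥ y) = (A *ᵥ x) ⬝ᵥ y := by
  rw [dp_mv, hA]

lemma dp_self_nonneg {n : Type*} [Fintype n] (x : n → ℝ) : 0 ≤ x ⬝ᵥ x :=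
  Finset.sum_nonneg fun _ _ => mul_self_nonneg _

lemma dp_eq_sum_sq {n : Type*} [Fintype n] (x : n → ℝ) : x ⬝ᵥ x = ∑ i, x i ^ 2 := by
  simp [dotProduct, pow_two]

lemma dp_cs {n : Type*} [Fintype n] (x y : n → ℝ) :
    (x ⬝ᵥ y) ^ 2 ≤ (x ⬝ᵥ x) * (y ⬝ᵥ y) := by
  simpa [dotProduct, pow_two] using Finset.sum_mul_sq_le_sq_mul_sq Finset.univ x y

/-- Theorem 2 of the paper, algebraic form: the maximum of the
integrated mean squared error over the contamination class equals
σ² tr(R⁻¹) + κ² λ_max(U), with U = R⁻¹ S R⁻¹. -/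
theorem stmt_5 {N p : ℕ} (hp : 0 < p) (hNp : p < N)
    (F Q : Matrix (Fin N) (Fin p) ℝ) (T : Matrix (Fin p) (Fin p) ℝ)
    (hF : F = Q * T) (hQ : Qᵀ * Q = 1) (hT : IsUnit T)
    (d : Fin N → ℝ) (hd : ∀ i, 0 ≤ d i)
    (D : Matrix (Fin N) (Fin N) ℝ) (hD : D = Matrix.diagonal d)
    (R S : Matrix (Fin p) (Fin p) ℝ)
    (hR : R = Qᵀ * D * Q) (hS : S = Qᵀ * D ^ 2 * Q)
    (hRinv : IsUnit R)
    (hU : (R⁻¹ * S * R⁻¹).IsHermitian)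
    (σ2 κ : ℝ) (hσ : 0 ≤ σ2) (hκ : 0 < κ) :
    IsGreatest
      {v : ℝ | ∃ τ : Fin N → ℝ, Fᵀ *ᵥ τ = 0 ∧ (∑ i, τ i ^ 2 = κ ^ 2) ∧
        v = σ2 * ((Fᵀ * F) * (Fᵀ * D * F)⁻¹).trace + κ ^ 2 +
            ((Fᵀ * D) *ᵥ τ) ⬝ᵥ
              (((Fᵀ * D * F)⁻¹ * (Fᵀ * F) * (Fᵀ * D * F)⁻¹) *ᵥ ((Fᵀ * D) *ᵥ τ))}
      (σ2 * (R⁻¹).trace + κ ^ 2 * (⨆ i, hU.eigenvalues i)) := by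
  classical
  haveI : Nonempty (Fin p) := ⟨⟨0, hp⟩⟩
  set lam := ⨆ i, hU.eigenvalues i with hlamdef
  have hTd : IsUnit T.det := (Matrix.isUnit_iff_isUnit_det T).mp hT
  have hRd : IsUnit R.det := (Matrix.isUnit_iff_isUnit_det R).mp hRinv
  have hTtd : IsUnit Tᵀ.det := by rwa [Matrix.det_transpose]
  have hDsym : Dᵀ = D := by rw [hD, Matrix.diagonal_transpose]
  have hRsym : Rᵀ = R := by
    rw [hR, Matrix.transpose_mul, Matrix.transpose_mul, Matrix.transpose_transpose, hDsym,
      ← Matrix.mul_assoc]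
  have hRisym : (R⁻¹)ᵀ = R⁻¹ := by rw [Matrix.transpose_nonsing_inv, hRsym]
  have hFt : Fᵀ = Tᵀ * Qᵀ := by rw [hF, Matrix.transpose_mul]
  have hAeq : Fᵀ * F = Tᵀ * T := by
    rw [hFt, hF, Matrix.mul_assoc, ← Matrix.mul_assoc Qᵀ Q T, hQ, Matrix.one_mul]
  have hM0 : Fᵀ * D * F = Tᵀ * R * T := by
    rw [hFt, hF, hR]; simp only [Matrix.mul_assoc]
  have hM0inv : (Fᵀ * D * F)⁻¹ = T⁻¹ * (R⁻¹ * (Tᵀ)⁻¹) := by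
    rw [hM0, Matrix.mul_inv_rev, Matrix.mul_inv_rev]
  have htr : ((Fᵀ * F) * (Fᵀ * D * F)⁻¹).trace = (R⁻¹).trace := by
    rw [hAeq, hM0inv, Matrix.mul_assoc Tᵀ T _, Matrix.mul_nonsing_inv_cancel_left _ _ hTd,
      Matrix.trace_mul_comm, Matrix.mul_assoc, Matrix.nonsing_inv_mul _ hTtd, Matrix.mul_one]
  -- quadratic form value
  have hqval : ∀ τ : Fin N → ℝ,
      ((Fᵀ * D) *ᵥ τ) ⬝ᵥ (((Fᵀ * D * F)⁻¹ * (Fᵀ * F) * (Fᵀ * D * F)⁻¹) *ᵥ ((Fᵀ * D) *ᵥ τ)) =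
      (R⁻¹ *ᵥ ((Qᵀ * D) *ᵥ τ)) ⬝ᵥ (R⁻¹ *ᵥ ((Qᵀ * D) *ᵥ τ)) := by
    intro τ
    have hC : (Fᵀ * D * F)⁻¹ * (Fᵀ * F) * (Fᵀ * D * F)⁻¹ = T⁻¹ * (R⁻¹ * (R⁻¹ * (Tᵀ)⁻¹)) := by
      rw [hM0inv, hAeq]
      simp only [Matrix.mul_assoc]
      rw [Matrix.nonsing_inv_mul_cancel_left _ _ hTtd, Matrix.mul_nonsing_inv_cancel_left _ _ hTd]
    have h1 : (Fᵀ * D) *ᵥ τ = Tᵀ *ᵥ ((Qᵀ * D) *ᵥ τ) := by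
      rw [hFt, Matrix.mulVec_mulVec, Matrix.mul_assoc]
    rw [hC, h1]
    set z := (Qᵀ * D) *ᵥ τ with hz
    rw [dp_mv, Matrix.transpose_transpose]
    have h3 : T *ᵥ ((T⁻¹ * (R⁻¹ * (R⁻¹ * (Tᵀ)⁻¹))) *ᵥ (Tᵀ *ᵥ z)) = R⁻¹ *ᵥ (R⁻¹ *ᵥ z) := by
      simp only [Matrix.mulVec_mulVec]
      congr 1
      simp only [Matrix.mul_assoc]
      rw [Matrix.nonsing_inv_mul _ hTtd, Matrix.mul_one,
        Matrix.mul_nonsing_inv_cancel_left _ _ hTd]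
    rw [h3, dp_symm _ hRisym]
  -- kernel condition
  have hker : ∀ τ : Fin N → ℝ, Fᵀ *ᵥ τ = 0 ↔ Qᵀ *ᵥ τ = 0 := by
    intro τ
    constructor
    · intro h
      have h' : (Tᵀ * Qᵀ) *ᵥ τ = 0 := by rw [← hFt]; exact h
      have h2 := congrArg (fun w => (Tᵀ)⁻¹ *ᵥ w) h'
      simpa [Matrix.mulVec_mulVec, ← Matrix.mul_assoc,
        Matrix.nonsing_inv_mul _ hTtd] using h2
    · intro h
      rw [hFt, ← Matrix.mulVec_mulVec, h, Matrix.mulVec_zero]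
  -- basic mulVec identities
  have hDQt : (D * Q)ᵀ = Qᵀ * D := by rw [Matrix.transpose_mul, hDsym]
  have hSdec : (Qᵀ * D) * (D * Q) = S := by
    rw [hS, pow_two]; simp only [Matrix.mul_assoc]
  have hQtDQv : ∀ z : Fin p → ℝ, Qᵀ *ᵥ ((D * Q) *ᵥ z) = R *ᵥ z := by
    intro z; rw [Matrix.mulVec_mulVec, ← Matrix.mul_assoc, ← hR]
  have hQtQv : ∀ z : Fin p → ℝ, Qᵀ *ᵥ (Q *ᵥ z) = z := by
    intro z; rw [Matrix.mulVec_mulVec, hQ, Matrix.one_mulVec]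
  have hQtDmul : ∀ z : Fin p → ℝ, (Qᵀ * D) *ᵥ ((D * Q) *ᵥ z) = S *ᵥ z := by
    intro z; rw [Matrix.mulVec_mulVec, hSdec]
  have hQtD_Q : ∀ z : Fin p → ℝ, (Qᵀ * D) *ᵥ (Q *ᵥ z) = R *ᵥ z := by
    intro z; rw [Matrix.mulVec_mulVec, ← hR]
  have hRRi : ∀ z : Fin p → ℝ, R *ᵥ (R⁻¹ *ᵥ z) = z := by
    intro z; rw [Matrix.mulVec_mulVec, Matrix.mul_nonsing_inv _ hRd, Matrix.one_mulVec]
  have hRiR : ∀ z : Fin p → ℝ, R⁻¹ *ᵥ (R *ᵥ z) = z := by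
    intro z; rw [Matrix.mulVec_mulVec, Matrix.nonsing_inv_mul _ hRd, Matrix.one_mulVec]
  have hUmv : ∀ x : Fin p → ℝ, (R⁻¹ * S * R⁻¹) *ᵥ x = R⁻¹ *ᵥ (S *ᵥ (R⁻¹ *ᵥ x)) := by
    intro x; simp only [Matrix.mulVec_mulVec, Matrix.mul_assoc]
  have huu : ∀ x : Fin p → ℝ,
      ((D * Q) *ᵥ (R⁻¹ *ᵥ x)) ⬝ᵥ ((D * Q) *ᵥ (R⁻¹ *ᵥ x)) = x ⬝ᵥ ((R⁻¹ * S * R⁻¹) *ᵥ x) := by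
    intro x
    rw [dp_mv, hDQt, hQtDmul, hUmv, dp_symm _ hRisym]
  -- spectral facts
  have hmulam : ∀ i, hU.eigenvalues i ≤ lam := fun i =>
    le_ciSup (Set.Finite.bddAbove (Set.finite_range _)) i
  obtain ⟨i₀, hi₀⟩ := Finite.exists_max hU.eigenvalues
  have hlam_eq : lam = hU.eigenvalues i₀ := le_antisymm (ciSup_le hi₀) (hmulam i₀)
  have hUdecomp : R⁻¹ * S * R⁻¹ =
      (hU.eigenvectorUnitary : Matrix (Fin p) (Fin p) ℝ) * Matrix.diagonal hU.eigenvalues *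
        (hU.eigenvectorUnitary : Matrix (Fin p) (Fin p) ℝ)ᵀ := by
    conv_lhs => rw [hU.spectral_theorem]
    rw [Unitary.conjStarAlgAut_apply, Matrix.star_eq_conjTranspose, Matrix.conjTranspose_eq_transpose_of_trivial,
      RCLike.ofReal_real_eq_id, Function.id_comp]
  set V : Matrix (Fin p) (Fin p) ℝ := (hU.eigenvectorUnitary : Matrix (Fin p) (Fin p) ℝ)
    with hVdef
  have hVV : V * Vᵀ = 1 := by
    have h := (Matrix.mem_unitaryGroup_iff).mp hU.eigenvectorUnitary.2
    rwa [Matrix.star_eq_conjTranspose, Matrix.conjTranspose_eq_transpose_of_trivial] at h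
  have hray : ∀ x : Fin p → ℝ, x ⬝ᵥ ((R⁻¹ * S * R⁻¹) *ᵥ x) ≤ lam * (x ⬝ᵥ x) := by
    intro x
    have hw : (R⁻¹ * S * R⁻¹) *ᵥ x = V *ᵥ (Matrix.diagonal hU.eigenvalues *ᵥ (Vᵀ *ᵥ x)) := by
      conv_lhs => rw [hUdecomp]
      simp only [Matrix.mulVec_mulVec, Matrix.mul_assoc]
    rw [hw, dotProduct_comm, dp_mv]
    set w := Vᵀ *ᵥ x with hwdef
    have hww : w ⬝ᵥ w = x ⬝ᵥ x := by
      rw [hwdef, dp_mv, Matrix.transpose_transpose, Matrix.mulVec_mulVec, hVV,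
        Matrix.one_mulVec]
    calc (Matrix.diagonal hU.eigenvalues *ᵥ w) ⬝ᵥ w
        = ∑ i, hU.eigenvalues i * w i * w i := by
          simp [dotProduct, Matrix.mulVec_diagonal]
      _ ≤ ∑ i, lam * (w i * w i) := Finset.sum_le_sum (fun i _ => by
          have h1 := hmulam i
          nlinarith [mul_self_nonneg (w i)])
      _ = lam * (w ⬝ᵥ w) := by simp only [dotProduct, Finset.mul_sum]
      _ = lam * (x ⬝ᵥ x) := by rw [hww]
  -- U ⪰ I
  have hgeone : ∀ x : Fin p → ℝ, x ⬝ᵥ x ≤ x ⬝ᵥ ((R⁻¹ * S * R⁻¹) *ᵥ x) := by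
    intro x
    rw [← huu x]
    set u := (D * Q) *ᵥ (R⁻¹ *ᵥ x) with hu
    have h1 : x = Qᵀ *ᵥ u := by rw [hu, hQtDQv, hRRi]
    have h2 : x ⬝ᵥ x = u ⬝ᵥ (Q *ᵥ (Qᵀ *ᵥ u)) := by
      conv_lhs => rw [h1]
      rw [dp_mv, Matrix.transpose_transpose]
    have h4 : (Q *ᵥ (Qᵀ *ᵥ u)) ⬝ᵥ (Q *ᵥ (Qᵀ *ᵥ u)) = u ⬝ᵥ (Q *ᵥ (Qᵀ *ᵥ u)) := by
      rw [dp_mv, hQtQv, dp_mv, Matrix.transpose_transpose]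
    have h3 : 0 ≤ (u - Q *ᵥ (Qᵀ *ᵥ u)) ⬝ᵥ (u - Q *ᵥ (Qᵀ *ᵥ u)) := dp_self_nonneg _
    have hcomm : (Q *ᵥ (Qᵀ *ᵥ u)) ⬝ᵥ u = u ⬝ᵥ (Q *ᵥ (Qᵀ *ᵥ u)) := dotProduct_comm _ _
    have h5 : (u - Q *ᵥ (Qᵀ *ᵥ u)) ⬝ᵥ (u - Q *ᵥ (Qᵀ *ᵥ u)) =
        u ⬝ᵥ u - u ⬝ᵥ (Q *ᵥ (Qᵀ *ᵥ u)) := by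
      rw [sub_dotProduct, dotProduct_sub, dotProduct_sub, h4, hcomm]; ring
    rw [h2]
    linarith [h3, h5]
  -- the top eigenvector
  set ev : Fin p → ℝ := ⇑(hU.eigenvectorBasis i₀) with hevdef
  have hev : (R⁻¹ * S * R⁻¹) *ᵥ ev = hU.eigenvalues i₀ • ev := hU.mulVec_eigenvectorBasis i₀
  have hev1 : ev ⬝ᵥ ev = 1 := by
    have h1 : ‖hU.eigenvectorBasis i₀‖ = 1 := hU.eigenvectorBasis.orthonormal.1 i₀
    have h2 : ev ⬝ᵥ ev = ‖hU.eigenvectorBasis i₀‖ ^ 2 := by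
      rw [← real_inner_self_eq_norm_sq]
      simp only [hevdef, PiLp.inner_apply, RCLike.inner_apply, dotProduct, conj_trivial]
    rw [h2, h1, one_pow]
  have hlamge1 : 1 ≤ lam := by
    have h := hgeone ev
    rw [hev, dotProduct_smul, hev1, smul_eq_mul, mul_one] at h
    rw [hlam_eq]; exact h
  -- upper bound for the quadratic form on the constraint set
  have hub : ∀ τ : Fin N → ℝ, Qᵀ *ᵥ τ = 0 → τ ⬝ᵥ τ = κ ^ 2 →
      (R⁻¹ *ᵥ ((Qᵀ * D) *ᵥ τ)) ⬝ᵥ (R⁻¹ *ᵥ ((Qᵀ * D) *ᵥ τ)) ≤ κ ^ 2 * (lam - 1) := by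
    intro τ hτ0 hτκ
    set y := R⁻¹ *ᵥ ((Qᵀ * D) *ᵥ τ) with hy
    set c := y ⬝ᵥ y with hc
    have hc0 : 0 ≤ c := dp_self_nonneg y
    set u := (D * Q) *ᵥ (R⁻¹ *ᵥ y) with hu
    have h1 : u ⬝ᵥ τ = c := by
      rw [hu, dp_mv, hDQt, ← dp_symm _ hRisym, ← hy]
    have h2 : (Q *ᵥ y) ⬝ᵥ τ = 0 := by rw [dp_mv, hτ0, dotProduct_zero]
    have h3 : (u - Q *ᵥ y) ⬝ᵥ τ = c := by rw [sub_dotProduct, h1, h2, sub_zero]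
    have hcs : c ^ 2 ≤ ((u - Q *ᵥ y) ⬝ᵥ (u - Q *ᵥ y)) * κ ^ 2 := by
      have h := dp_cs (u - Q *ᵥ y) τ
      rwa [h3, hτκ] at h
    have hQtu : Qᵀ *ᵥ u = y := by rw [hu, hQtDQv, hRRi]
    have h4 : u ⬝ᵥ (Q *ᵥ y) = c := by
      rw [dotProduct_comm, dp_mv, hQtu, ← hc]
    have h5 : (Q *ᵥ y) ⬝ᵥ (Q *ᵥ y) = c := by rw [dp_mv, hQtQv, ← hc]
    have h6 : u ⬝ᵥ u ≤ lam * c := by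
      rw [hu, huu y, hc]
      exact hray y
    have hcomm : (Q *ᵥ y) ⬝ᵥ u = u ⬝ᵥ (Q *ᵥ y) := dotProduct_comm _ _
    have h7 : (u - Q *ᵥ y) ⬝ᵥ (u - Q *ᵥ y) ≤ (lam - 1) * c := by
      rw [sub_dotProduct, dotProduct_sub, dotProduct_sub, h4, h5, hcomm, h4]
      linarith [h6]
    have h8 : c ^ 2 ≤ (lam - 1) * c * κ ^ 2 :=
      le_trans hcs (mul_le_mul_of_nonneg_right h7 (sq_nonneg κ))
    rcases eq_or_lt_of_le hc0 with h | h
    · rw [← h]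
      have : 0 ≤ lam - 1 := by linarith
      positivity
    · have h9 : c * c ≤ (κ ^ 2 * (lam - 1)) * c := by
        have e1 : c * c = c ^ 2 := (sq c).symm
        have e2 : (lam - 1) * c * κ ^ 2 = (κ ^ 2 * (lam - 1)) * c := by ring
        rw [e1, ← e2]; exact h8
      exact (mul_le_mul_iff_left₀ h).mp h9
  have hsmulsum : ∀ (a : ℝ) (τ : Fin N → ℝ), (∑ i, (a • τ) i ^ 2) = a ^ 2 * (τ ⬝ᵥ τ) := by
    intro a τ
    rw [dp_eq_sum_sq, Finset.mul_sum]
    refine Finset.sum_congr rfl fun i _ => ?_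
    simp [Pi.smul_apply, smul_eq_mul]
    ring
  constructor
  · -- the maximum is attained
    by_cases hcase : 1 < lam
    · -- top eigenvalue exceeds 1 : use the eigenvector construction
      have hlam1 : 0 < lam - 1 := by linarith
      have hsq : Real.sqrt (lam - 1) ^ 2 = lam - 1 := Real.sq_sqrt hlam1.le
      have hsqpos : 0 < Real.sqrt (lam - 1) := Real.sqrt_pos.mpr hlam1
      set cst := κ / Real.sqrt (lam - 1) with hcst
      have hcst2 : cst ^ 2 * (lam - 1) = κ ^ 2 := by
        rw [hcst, div_pow, hsq, div_mul_cancel₀]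
        exact ne_of_gt hlam1
      set τ0 : Fin N → ℝ := (D * Q) *ᵥ (R⁻¹ *ᵥ ev) - Q *ᵥ ev with hτ0def
      have hQτ0 : Qᵀ *ᵥ τ0 = 0 := by
        rw [hτ0def, Matrix.mulVec_sub, hQtDQv, hRRi, hQtQv, sub_self]
      have haa : ((D * Q) *ᵥ (R⁻¹ *ᵥ ev)) ⬝ᵥ ((D * Q) *ᵥ (R⁻¹ *ᵥ ev)) = lam := by
        rw [huu ev, hev, dotProduct_smul, hev1, smul_eq_mul, mul_one, hlam_eq]
      have hab : ((D * Q) *ᵥ (R⁻¹ *ᵥ ev)) ⬝ᵥ (Q *ᵥ ev) = 1 := by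
        rw [dp_mv, hDQt, hQtD_Q, ← dp_symm _ hRisym, hRiR, hev1]
      have hba : (Q *ᵥ ev) ⬝ᵥ ((D * Q) *ᵥ (R⁻¹ *ᵥ ev)) = 1 := by
        rw [dotProduct_comm]; exact hab
      have hbb : (Q *ᵥ ev) ⬝ᵥ (Q *ᵥ ev) = 1 := by rw [dp_mv, hQtQv, hev1]
      have hττ : τ0 ⬝ᵥ τ0 = lam - 1 := by
        rw [hτ0def, sub_dotProduct, dotProduct_sub, dotProduct_sub, haa, hab, hba, hbb]
        ring
      have hQτD : (Qᵀ * D) *ᵥ τ0 = S *ᵥ (R⁻¹ *ᵥ ev) - R *ᵥ ev := by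
        rw [hτ0def, Matrix.mulVec_sub, hQtDmul, hQtD_Q]
      have hy0 : R⁻¹ *ᵥ ((Qᵀ * D) *ᵥ τ0) = (lam - 1) • ev := by
        rw [hQτD, Matrix.mulVec_sub, ← hUmv, hev, hRiR, ← hlam_eq, sub_smul, one_smul]
      refine ⟨cst • τ0, ?_, ?_, ?_⟩
      · exact (hker _).mpr (by rw [Matrix.mulVec_smul, hQτ0, smul_zero])
      · rw [hsmulsum, hττ]; exact hcst2
      · rw [htr, hqval]
        have hyv : R⁻¹ *ᵥ ((Qᵀ * D) *ᵥ (cst • τ0)) = (cst * (lam - 1)) • ev := by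
          rw [Matrix.mulVec_smul, Matrix.mulVec_smul, hy0, smul_smul]
        rw [hyv, smul_dotProduct, dotProduct_smul, hev1, smul_eq_mul, smul_eq_mul, mul_one]
        linear_combination (1 - lam) * hcst2
    · -- top eigenvalue equals 1 : any unit kernel vector works
      have hlameq1 : lam = 1 := le_antisymm (not_lt.mp hcase) hlamge1
      have hkerne : ∃ τ1 : Fin N → ℝ, τ1 ≠ 0 ∧ Qᵀ *ᵥ τ1 = 0 := by
        by_contra hcon
        push_neg at hcon
        have hinj : Function.Injective (Matrix.mulVecLin Qᵀ) := by
          rw [← LinearMap.ker_eq_bot, Submodule.eq_bot_iff]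
          intro x hx
          by_contra hx0
          have hx' : Qᵀ *ᵥ x = 0 := by
            rw [← Matrix.mulVecLin_apply]; exact LinearMap.mem_ker.mp hx
          exact hcon x hx0 hx'
        have hle := LinearMap.finrank_le_finrank_of_injective hinj
        simp only [Module.finrank_pi, Fintype.card_fin] at hle
        omega
      obtain ⟨τ1, hτ1ne, hτ1ker⟩ := hkerne
      have hτ1pos : 0 < τ1 ⬝ᵥ τ1 :=
        lt_of_le_of_ne (dp_self_nonneg τ1)
          (fun h => hτ1ne (dotProduct_self_eq_zero.mp h.symm))
      set cst := κ / Real.sqrt (τ1 ⬝ᵥ τ1) with hcst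
      have hsq : Real.sqrt (τ1 ⬝ᵥ τ1) ^ 2 = τ1 ⬝ᵥ τ1 := Real.sq_sqrt hτ1pos.le
      have hcst2 : cst ^ 2 * (τ1 ⬝ᵥ τ1) = κ ^ 2 := by
        rw [hcst, div_pow, hsq, div_mul_cancel₀]
        exact ne_of_gt hτ1pos
      have hQτ : Qᵀ *ᵥ (cst • τ1) = 0 := by rw [Matrix.mulVec_smul, hτ1ker, smul_zero]
      have hsum : ∑ i, (cst • τ1) i ^ 2 = κ ^ 2 := by rw [hsmulsum]; exact hcst2
      have hdp : (cst • τ1) ⬝ᵥ (cst • τ1) = κ ^ 2 := by rw [dp_eq_sum_sq]; exact hsum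
      refine ⟨cst • τ1, (hker _).mpr hQτ, hsum, ?_⟩
      rw [htr, hqval]
      have hle := hub (cst • τ1) hQτ hdp
      have hge := dp_self_nonneg (R⁻¹ *ᵥ ((Qᵀ * D) *ᵥ (cst • τ1)))
      have hz : κ ^ 2 * (lam - 1) = 0 := by rw [hlameq1]; ring
      have h0 : (R⁻¹ *ᵥ ((Qᵀ * D) *ᵥ (cst • τ1))) ⬝ᵥ
          (R⁻¹ *ᵥ ((Qᵀ * D) *ᵥ (cst • τ1))) = 0 := le_antisymm (hz ▸ hle) hge
      rw [h0, hlameq1]; ring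
  · -- upper bound
    rintro v ⟨τ, hτF, hτsum, rfl⟩
    have hτ0 : Qᵀ *ᵥ τ = 0 := (hker τ).mp hτF
    have hττ : τ ⬝ᵥ τ = κ ^ 2 := by rw [dp_eq_sum_sq]; exact hτsum
    rw [htr, hqval]
    have h := hub τ hτ0 hττ
    have he : κ ^ 2 * (lam - 1) = κ ^ 2 * lam - κ ^ 2 := by ring
    linarith [h]
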